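/- The decoupled-contrastive-learning variant of InfoNCE upper-bounds the linear kernel contrastive loss (Proposition G.1, inequality (7.3)): For every measurable f : X → S^{d−1}, every τ > 0, λ ≥ 0 and integer M ≥ 1, τ^{−1}·L_LinKCL(f;λ) ≤ −E_{(x,x⁺)}[f(x)⊤f(x⁺)/τ] + λ·E_{x, x_1⁻,…,x_M⁻}[ log Σ_{i=1}^M e^{f(x)⊤f(x_i⁻)/τ} ] + λ·log(1/M), where x has law P_X and x_1⁻,…,x_M⁻ are i.i.d. with law P_X independent of x. -/

import Mathlib

open MeasureTheory
open scoped RealInnerProductSpace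

/-- **The decoupled-contrastive-learning variant of InfoNCE upper-bounds the linear kernel
contrastive loss (Proposition G.1, inequality (7.3)).** For every measurable
`f : X → S^{d−1}`, `τ > 0`, `λ ≥ 0` and integer `M ≥ 1`,
`τ⁻¹·L_LinKCL(f;λ) ≤ −E_{(x,x⁺)}[f(x)⊤f(x⁺)/τ]
  + λ·E_{x,x₁⁻,…,x_M⁻}[ log Σ_{i=1}^M e^{f(x)⊤f(xᵢ⁻)/τ} ] + λ·log(1/M)`,
where `x` has law `P_X` and `x₁⁻,…,x_M⁻` are i.i.d. `P_X` independent of `x`, and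
`L_LinKCL(f;λ) := −E_{(x,x⁺)}[f(x)⊤f(x⁺)] + λ·E_{(x,x⁻)}[f(x)⊤f(x⁻)]`. -/
lemma my_pi_map_eval {X : Type*} [MeasurableSpace X] (PX : Measure X)
    [IsProbabilityMeasure PX] {M : ℕ} (i : Fin M) :
    (Measure.pi fun _ : Fin M => PX).map (Function.eval i) = PX := by
  ext s hs
  rw [Measure.map_apply (measurable_pi_apply i) hs, Set.eval_preimage, Measure.pi_pi]
  rw [Finset.prod_eq_single i]
  · simp
  · intro j _ hj; simp [Function.update_of_ne hj]
  · simp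

lemma my_log_sum_exp {M : ℕ} (hM : 1 ≤ M) (t : Fin M → ℝ) :
    Real.log M + (∑ i, t i) / M ≤ Real.log (∑ i, Real.exp (t i)) := by
  have hMpos : (0:ℝ) < M := by exact_mod_cast hM
  have jensen := convexOn_exp.map_sum_le (t := Finset.univ) (w := fun _ : Fin M => (M:ℝ)⁻¹)
    (p := t) (fun i _ => by positivity) (by simp [Finset.card_univ]; field_simp)
    (fun i _ => Set.mem_univ _)
  have h1 : (M:ℝ) * Real.exp ((∑ i, t i) / M) ≤ ∑ i, Real.exp (t i) := by
    have : Real.exp ((∑ i, t i) / M) ≤ (M:ℝ)⁻¹ * ∑ i, Real.exp (t i) := by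
      simpa [smul_eq_mul, ← Finset.mul_sum, Finset.sum_div, div_eq_inv_mul] using jensen
    calc (M:ℝ) * Real.exp ((∑ i, t i) / M) ≤ (M:ℝ) * ((M:ℝ)⁻¹ * ∑ i, Real.exp (t i)) :=
          mul_le_mul_of_nonneg_left this hMpos.le
      _ = ∑ i, Real.exp (t i) := by field_simp
  calc Real.log M + (∑ i, t i) / M = Real.log ((M:ℝ) * Real.exp ((∑ i, t i) / M)) := by
        rw [Real.log_mul hMpos.ne' (Real.exp_ne_zero _), Real.log_exp]
    _ ≤ Real.log (∑ i, Real.exp (t i)) :=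
        Real.log_le_log (by positivity) h1

theorem dcl_infonce_upper_bounds_linear_kcl
    {X : Type*} [MeasurableSpace X] {d : ℕ}
    (PX : Measure X) [IsProbabilityMeasure PX]
    (Pplus : Measure (X × X)) [IsProbabilityMeasure Pplus]
    (hfst : Pplus.map Prod.fst = PX) (hsnd : Pplus.map Prod.snd = PX)
    (f : X → EuclideanSpace ℝ (Fin d)) (hf : Measurable f) (hfs : ∀ x, ‖f x‖ = 1)
    (τ lam : ℝ) (hτ : 0 < τ) (hlam : 0 ≤ lam) (M : ℕ) (hM : 1 ≤ M) :
    τ⁻¹ * (-(∫ p, (⟪f p.1, f p.2⟫ : ℝ) ∂Pplus)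
        + lam * ∫ p, (⟪f p.1, f p.2⟫ : ℝ) ∂(PX.prod PX)) ≤
      -(∫ p, (⟪f p.1, f p.2⟫ : ℝ) / τ ∂Pplus)
        + lam * ∫ q, Real.log (∑ i : Fin M, Real.exp ((⟪f q.1, f (q.2 i)⟫ : ℝ) / τ))
            ∂(PX.prod (Measure.pi fun _ : Fin M => PX))
        + lam * Real.log (1 / M) := by
  have hMpos : (0:ℝ) < M := by exact_mod_cast hM
  set μ := PX.prod (Measure.pi fun _ : Fin M => PX) with hμ
  haveI : IsProbabilityMeasure μ := by rw [hμ]; infer_instance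
  set A : ℝ := ∫ p, (⟪f p.1, f p.2⟫ : ℝ) ∂Pplus with hA
  set B : ℝ := ∫ p, (⟪f p.1, f p.2⟫ : ℝ) ∂(PX.prod PX) with hB
  -- bounds on inner products
  have hbnd : ∀ x y : X, |(⟪f x, f y⟫ : ℝ)| ≤ 1 := by
    intro x y
    calc |(⟪f x, f y⟫ : ℝ)| ≤ ‖f x‖ * ‖f y‖ := abs_real_inner_le_norm _ _
      _ = 1 := by rw [hfs, hfs, one_mul]
  -- measurability of coordinate inner products
  have hmeas : ∀ i : Fin M, Measurable (fun q : X × (Fin M → X) => (⟪f q.1, f (q.2 i)⟫ : ℝ)) := by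
    intro i
    exact (hf.comp measurable_fst).inner (hf.comp ((measurable_pi_apply i).comp measurable_snd))
  -- each coordinate integral equals B
  have hcoord : ∀ i : Fin M,
      (∫ q, (⟪f q.1, f (q.2 i)⟫ : ℝ) ∂μ) = B := by
    intro i
    have hmap : μ.map (Prod.map id (Function.eval i)) = PX.prod PX := by
      rw [hμ, ← Measure.map_prod_map _ _ measurable_id (measurable_pi_apply i),
        Measure.map_id, my_pi_map_eval]
    have : (∫ q, (⟪f q.1, f (q.2 i)⟫ : ℝ) ∂μ)
        = ∫ p, (⟪f p.1, f p.2⟫ : ℝ) ∂(μ.map (Prod.map id (Function.eval i))) := by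
      rw [integral_map (φ := Prod.map id (Function.eval i)) (measurable_id.prodMap (measurable_pi_apply i)).aemeasurable
        (((hf.comp measurable_fst).inner (hf.comp measurable_snd)).aestronglyMeasurable :
          AEStronglyMeasurable (fun p : X × X => (⟪f p.1, f p.2⟫ : ℝ)) _)]
      rfl
    rw [this, hmap]
  -- integrability of coordinate inner products
  have hint : ∀ i : Fin M,
      Integrable (fun q : X × (Fin M → X) => (⟪f q.1, f (q.2 i)⟫ : ℝ) / τ) μ := by
    intro i
    refine ⟨((hmeas i).div_const τ).aestronglyMeasurable,
      HasFiniteIntegral.of_bounded (C := 1 / τ) (ae_of_all _ fun q => ?_)⟩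
    rw [Real.norm_eq_abs, abs_div, abs_of_pos hτ, div_le_div_iff_of_pos_right hτ]
    exact hbnd _ _
  -- the lower-bound function h and the log-sum-exp function g
  set g : X × (Fin M → X) → ℝ :=
    fun q => Real.log (∑ i : Fin M, Real.exp ((⟪f q.1, f (q.2 i)⟫ : ℝ) / τ)) with hg
  set h : X × (Fin M → X) → ℝ :=
    fun q => Real.log M + (∑ i : Fin M, (⟪f q.1, f (q.2 i)⟫ : ℝ) / τ) / M with hh
  have hle : ∀ q, h q ≤ g q := fun q => my_log_sum_exp hM _
  -- integrability of h
  have hinth : Integrable h μ := by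
    refine (integrable_const _).add ?_
    exact (integrable_finset_sum _ fun i _ => hint i).div_const _
  -- integrability of g (bounded)
  have hintg : Integrable g μ := by
    refine ⟨(Real.measurable_log.comp (Finset.measurable_sum _ fun i _ =>
      Real.measurable_exp.comp ((hmeas i).div_const τ))).aestronglyMeasurable,
      HasFiniteIntegral.of_bounded (C := Real.log M + 1 / τ) (ae_of_all _ fun q => ?_)⟩
    have hub : ∀ i : Fin M, (⟪f q.1, f (q.2 i)⟫ : ℝ) / τ ≤ 1 / τ := fun i =>
      (div_le_div_iff_of_pos_right hτ).mpr (abs_le.mp (hbnd _ _)).2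
    have hlb : ∀ i : Fin M, -(1 / τ) ≤ (⟪f q.1, f (q.2 i)⟫ : ℝ) / τ := fun i => by
      rw [← neg_div]
      exact (div_le_div_iff_of_pos_right hτ).mpr (abs_le.mp (hbnd _ _)).1
    have hgub : g q ≤ Real.log M + 1 / τ := by
      rw [hg]
      calc Real.log (∑ i : Fin M, Real.exp ((⟪f q.1, f (q.2 i)⟫ : ℝ) / τ))
          ≤ Real.log (∑ _i : Fin M, Real.exp (1 / τ)) := by
            apply Real.log_le_log (Finset.sum_pos (fun i _ => Real.exp_pos _) ?_)
            · exact Finset.sum_le_sum fun i _ => Real.exp_le_exp.mpr (hub i)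
            · simpa using Finset.univ_nonempty_iff.mpr ⟨⟨0, hM⟩⟩
        _ = Real.log M + 1 / τ := by
            rw [Finset.sum_const, Finset.card_univ, Fintype.card_fin, nsmul_eq_mul,
              Real.log_mul hMpos.ne' (Real.exp_ne_zero _), Real.log_exp]
    have hglb : Real.log M - 1 / τ ≤ g q := by
      have := my_log_sum_exp hM (fun i => (⟪f q.1, f (q.2 i)⟫ : ℝ) / τ)
      have hsum : -(1 / τ) ≤ (∑ i : Fin M, (⟪f q.1, f (q.2 i)⟫ : ℝ) / τ) / M := by
        have hS : (M:ℝ) * (-(1 / τ)) ≤ ∑ i : Fin M, (⟪f q.1, f (q.2 i)⟫ : ℝ) / τ := by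
          calc (M:ℝ) * (-(1 / τ)) = ∑ _i : Fin M, -(1 / τ) := by
                simp [Finset.sum_const, nsmul_eq_mul]
            _ ≤ _ := Finset.sum_le_sum fun i _ => hlb i
        rw [le_div_iff₀ hMpos]
        linarith
      have : Real.log M + -(1/τ) ≤ g q := le_trans (by linarith) this
      linarith
    rw [Real.norm_eq_abs, abs_le]
    have hlogM : 0 ≤ Real.log M := Real.log_nonneg (by exact_mod_cast hM)
    have h1τ : 0 < 1 / τ := by positivity
    constructor <;> [linarith; linarith]
  -- main inequality on integrals
  have hC : Real.log M + B / τ ≤ ∫ q, g q ∂μ := by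
    have : (∫ q, h q ∂μ) ≤ ∫ q, g q ∂μ := integral_mono hinth hintg hle
    have heq : (∫ q, h q ∂μ) = Real.log M + B / τ := by
      rw [hh]
      rw [integral_add (integrable_const _)
        ((integrable_finset_sum _ fun i _ => hint i).div_const _)]
      simp only [integral_const, measure_univ, probReal_univ, ENNReal.toReal_one, one_smul, smul_eq_mul]
      rw [integral_div, integral_finset_sum _ (fun i _ => hint i)]
      have : ∀ i ∈ Finset.univ, (∫ q, (⟪f q.1, f (q.2 i)⟫ : ℝ) / τ ∂μ) = B / τ := by
        intro i _
        rw [integral_div, hcoord i]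
      rw [Finset.sum_congr rfl this, Finset.sum_const, Finset.card_univ, Fintype.card_fin,
        nsmul_eq_mul]
      rw [one_mul, mul_div_cancel_left₀ _ hMpos.ne']
    linarith [heq ▸ this]
  -- assemble
  have hA2 : (∫ p, (⟪f p.1, f p.2⟫ : ℝ) / τ ∂Pplus) = A / τ := integral_div τ _
  have hlog1M : Real.log (1 / (M:ℝ)) = -Real.log M := by
    rw [one_div, Real.log_inv]
  have hmul : lam * (Real.log M + B / τ) ≤ lam * ∫ q, g q ∂μ :=
    mul_le_mul_of_nonneg_left hC hlam
  have hexp : τ⁻¹ * (-A + lam * B) = -(A / τ) + lam * (B / τ) := by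
    field_simp
  rw [hexp, hA2, hlog1M]
  have : lam * ∫ q, g q ∂μ = lam * ∫ q, Real.log (∑ i : Fin M,
      Real.exp ((⟪f q.1, f (q.2 i)⟫ : ℝ) / τ)) ∂(PX.prod (Measure.pi fun _ : Fin M => PX)) := rfl
  linarith [this ▸ hmul]
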